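/- Consider the graph G_k with vertex set {s} ∪ {c_0,…,c_{k-1}} ∪ {leaf_{i,j} : 0 ≤ i,j ≤ k−1}, where edges are: {c_i, leaf_{i,j}} of length 1, {c_i, c_j} of length 5 for i ≠ j, {s, leaf_{i,j}} of length 2, and {s, c_i} of length 3. Then the labeling L with L(s) = {s}, L(c_i) = {s} ∪ {c_j : j ≥ i}, and L(leaf_{i,j}) = {s, c_i} is a valid hierarchical hub labeling of G_k: for every pair of vertices u,v there is a shortest u-v-path containing a vertex of L(u) ∩ L(v), and L respects any order π with π(s) maximal and π(c_i) = n − k + i. -/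

import Mathlib

/-- Vertices of the graph `G_k`: the apex `none`, the star centers `some (inl i)`,
and the star leaves `some (inr (i,j))` (leaf `j` of star `i`). -/
abbrev GkVert (k : ℕ) := Option (Fin k ⊕ (Fin k × Fin k))

/-- The apex vertex `s`. -/
def vS {k : ℕ} : GkVert k := none

/-- The star center `c_i`. -/
def vC {k : ℕ} (i : Fin k) : GkVert k := some (Sum.inl i)

/-- The leaf `leaf_{i,j}` of star `i`. -/
def vL {k : ℕ} (i j : Fin k) : GkVert k := some (Sum.inr (i, j))

/-- Edge lengths of `G_k`: star edges `{c_i, leaf_{i,j}}` have length 1, clique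
edges `{c_i, c_j}` (`i ≠ j`) length 5, apex-leaf edges `{s, leaf_{i,j}}` length 2,
apex-center edges `{s, c_i}` length 3; value 0 encodes "no edge". -/
def lenGk {k : ℕ} : GkVert k → GkVert k → ℕ
  | none, none => 0
  | none, some (Sum.inl _) => 3
  | none, some (Sum.inr _) => 2
  | some (Sum.inl _), none => 3
  | some (Sum.inr _), none => 2
  | some (Sum.inl i), some (Sum.inl j) => if i = j then 0 else 5
  | some (Sum.inl i), some (Sum.inr a) => if i = a.1 then 1 else 0
  | some (Sum.inr a), some (Sum.inl i) => if i = a.1 then 1 else 0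
  | some (Sum.inr _), some (Sum.inr _) => 0

/-- The graph `G_k`: `u` and `v` are adjacent iff they are joined by one of the
edges above. -/
def Gk (k : ℕ) : SimpleGraph (GkVert k) :=
  SimpleGraph.fromRel (fun u v => lenGk u v ≠ 0)

/-- The length of a walk in `G_k`. -/
def GkWalkLen {k : ℕ} {u v : GkVert k} (p : (Gk k).Walk u v) : ℕ :=
  (p.darts.map fun d => lenGk d.toProd.1 d.toProd.2).sum

/-- The labeling `L(s) = {s}`, `L(c_i) = {s} ∪ {c_j : j ≥ i}`,
`L(leaf_{i,j}) = {s, c_i}`. -/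
def GkLabel {k : ℕ} : GkVert k → Set (GkVert k)
  | none => {vS}
  | some (Sum.inl i) => {vS} ∪ {v | ∃ j : Fin k, i ≤ j ∧ v = vC j}
  | some (Sum.inr a) => {vS, vC a.1}

section Aux
variable {k : ℕ}

lemma lenGk_symm (a b : GkVert k) : lenGk a b = lenGk b a := by
  rcases a with _ | (i | a) <;> rcases b with _ | (j | b) <;> try rfl
  simp only [lenGk]
  rcases eq_or_ne i j with h | h
  · simp [h]
  · simp [h, Ne.symm h]

lemma adj_len {a b : GkVert k} (h : (Gk k).Adj a b) : lenGk a b ≠ 0 := by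
  rw [Gk, SimpleGraph.fromRel_adj] at h
  rcases h.2 with h2 | h2
  · exact h2
  · rw [lenGk_symm]; exact h2

lemma adj_of_len {a b : GkVert k} (hne : a ≠ b) (h : lenGk a b ≠ 0) : (Gk k).Adj a b := by
  rw [Gk, SimpleGraph.fromRel_adj]
  exact ⟨hne, Or.inl h⟩

lemma walk_lb (f : GkVert k → ℕ)
    (hf : ∀ a b : GkVert k, lenGk a b ≠ 0 → f b ≤ f a + lenGk a b) :
    ∀ {u v : GkVert k} (p : (Gk k).Walk u v), f v ≤ f u + GkWalkLen p := by
  intro u v p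
  induction p with
  | nil => simp [GkWalkLen]
  | @cons a b c h p ih =>
    have h1 := hf a b (adj_len h)
    have h2 : GkWalkLen (SimpleGraph.Walk.cons h p) = lenGk a b + GkWalkLen p := by
      simp [GkWalkLen]
    omega

lemma GkWalkLen_reverse {u v : GkVert k} (p : (Gk k).Walk u v) :
    GkWalkLen p.reverse = GkWalkLen p := by
  unfold GkWalkLen
  rw [SimpleGraph.Walk.darts_reverse, List.map_reverse, List.sum_reverse, List.map_map]
  congr 1
  apply List.map_congr_left
  intro d _
  exact lenGk_symm _ _

/-- distance-from-`s` potential -/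
def distS {k : ℕ} : GkVert k → ℕ
  | none => 0
  | some (Sum.inl _) => 3
  | some (Sum.inr _) => 2

/-- distance-from-`c_i` potential -/
def distC {k : ℕ} (i : Fin k) : GkVert k → ℕ
  | none => 3
  | some (Sum.inl j) => if j = i then 0 else 5
  | some (Sum.inr a) => if a.1 = i then 1 else 5

/-- distance-from-`leaf_{i,j}` potential -/
def distL {k : ℕ} (i j : Fin k) : GkVert k → ℕ
  | none => 2
  | some (Sum.inl i') => if i' = i then 1 else 5
  | some (Sum.inr a) => if a.1 = i then (if a.2 = j then 0 else 2) else 4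

lemma distS_lip : ∀ a b : GkVert k, lenGk a b ≠ 0 → distS b ≤ distS a + lenGk a b := by
  intro a b h
  rcases a with _ | (i | a) <;> rcases b with _ | (j | b) <;>
    simp [lenGk, distS] at h ⊢ <;> split_ifs at h ⊢ <;> simp_all <;> omega

lemma distC_lip (i : Fin k) :
    ∀ a b : GkVert k, lenGk a b ≠ 0 → distC i b ≤ distC i a + lenGk a b := by
  intro a b h
  rcases a with _ | (x | a) <;> rcases b with _ | (y | b) <;>
    simp [lenGk, distC] at h ⊢ <;> split_ifs at h ⊢ <;> simp_all <;> omega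

lemma distL_lip (i j : Fin k) :
    ∀ a b : GkVert k, lenGk a b ≠ 0 → distL i j b ≤ distL i j a + lenGk a b := by
  intro a b h
  rcases a with _ | (x | a) <;> rcases b with _ | (y | b) <;>
    simp [lenGk, distL] at h ⊢ <;> split_ifs at h ⊢ <;> simp_all <;> omega

/-- the statement to prove for each pair -/
def GoodPair (k : ℕ) (u v : GkVert k) : Prop :=
  ∃ p : (Gk k).Walk u v, p.IsPath ∧
    (∀ q : (Gk k).Walk u v, q.IsPath → GkWalkLen p ≤ GkWalkLen q) ∧
    ∃ x ∈ p.support, x ∈ GkLabel u ∧ x ∈ GkLabel v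

lemma GoodPair.symm {u v : GkVert k} (h : GoodPair k u v) : GoodPair k v u := by
  obtain ⟨p, hp, hmin, x, hx, hxu, hxv⟩ := h
  refine ⟨p.reverse, hp.reverse, ?_, x, ?_, hxv, hxu⟩
  · intro q hq
    rw [GkWalkLen_reverse]
    have := hmin q.reverse hq.reverse
    rwa [GkWalkLen_reverse] at this
  · rw [SimpleGraph.Walk.support_reverse, List.mem_reverse]; exact hx

lemma vS_mem_label (v : GkVert k) : (vS : GkVert k) ∈ GkLabel v := by
  rcases v with _ | (i | a) <;> simp [GkLabel]

lemma vC_mem_label_C {i j : Fin k} (hij : i ≤ j) : (vC j : GkVert k) ∈ GkLabel (vC i) := by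
  simp only [vC, GkLabel]
  exact Or.inr ⟨j, hij, rfl⟩

lemma vC_mem_label_L (i j : Fin k) : (vC i : GkVert k) ∈ GkLabel (vL i j) := by
  simp [vL, GkLabel, vC]

-- the seven basic cases
lemma case_SC (i : Fin k) : GoodPair k vS (vC i) := by
  have hadj : (Gk k).Adj vS (vC i) := adj_of_len (by simp [vS, vC]) (by simp [vS, vC, lenGk])
  refine ⟨SimpleGraph.Walk.cons hadj SimpleGraph.Walk.nil, ?_, ?_, vS, ?_, vS_mem_label _, vS_mem_label _⟩
  · simp only [SimpleGraph.Walk.isPath_def, SimpleGraph.Walk.support_cons, SimpleGraph.Walk.support_nil]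
    simp [SimpleGraph.Walk.isPath_def, vS, vC]
  · intro q hq
    have := walk_lb distS distS_lip q
    simp only [GkWalkLen, SimpleGraph.Walk.darts_cons, SimpleGraph.Walk.darts_nil]
    simp [distS, vS, vC, GkWalkLen, lenGk] at this ⊢
    omega
  · simp

lemma case_SL (i j : Fin k) : GoodPair k vS (vL i j) := by
  have hadj : (Gk k).Adj vS (vL i j) := adj_of_len (by simp [vS, vL]) (by simp [vS, vL, lenGk])
  refine ⟨SimpleGraph.Walk.cons hadj SimpleGraph.Walk.nil, ?_, ?_, vS, ?_, vS_mem_label _, vS_mem_label _⟩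
  · simp only [SimpleGraph.Walk.isPath_def, SimpleGraph.Walk.support_cons, SimpleGraph.Walk.support_nil]
    simp [SimpleGraph.Walk.isPath_def, vS, vL]
  · intro q hq
    have := walk_lb distS distS_lip q
    simp only [GkWalkLen, SimpleGraph.Walk.darts_cons, SimpleGraph.Walk.darts_nil]
    simp [distS, vS, vL, GkWalkLen, lenGk] at this ⊢
    omega
  · simp

lemma case_CC {i j : Fin k} (hij : i ≤ j) (hne : i ≠ j) : GoodPair k (vC i) (vC j) := by
  have hadj : (Gk k).Adj (vC i) (vC j) :=
    adj_of_len (by simp [vC, hne]) (by simp [vC, lenGk, hne])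
  refine ⟨SimpleGraph.Walk.cons hadj SimpleGraph.Walk.nil, ?_, ?_, vC j, ?_,
    vC_mem_label_C hij, vC_mem_label_C le_rfl⟩
  · simp only [SimpleGraph.Walk.isPath_def, SimpleGraph.Walk.support_cons, SimpleGraph.Walk.support_nil]
    simp [SimpleGraph.Walk.isPath_def, vC, hne]
  · intro q hq
    have := walk_lb (distC i) (distC_lip i) q
    simp only [GkWalkLen, SimpleGraph.Walk.darts_cons, SimpleGraph.Walk.darts_nil]
    simp [distC, vC, GkWalkLen, lenGk, hne, Ne.symm hne] at this ⊢
    omega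
  · simp

lemma case_CL_same (i j : Fin k) : GoodPair k (vC i) (vL i j) := by
  have hadj : (Gk k).Adj (vC i) (vL i j) :=
    adj_of_len (by simp [vC, vL]) (by simp [vC, vL, lenGk])
  refine ⟨SimpleGraph.Walk.cons hadj SimpleGraph.Walk.nil, ?_, ?_, vC i, ?_,
    vC_mem_label_C le_rfl, vC_mem_label_L i j⟩
  · simp only [SimpleGraph.Walk.isPath_def, SimpleGraph.Walk.support_cons, SimpleGraph.Walk.support_nil]
    simp [SimpleGraph.Walk.isPath_def, vC, vL]
  · intro q hq
    have := walk_lb (distC i) (distC_lip i) q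
    simp only [GkWalkLen, SimpleGraph.Walk.darts_cons, SimpleGraph.Walk.darts_nil]
    simp [distC, vC, vL, GkWalkLen, lenGk] at this ⊢
    omega
  · simp

lemma case_CL_diff {i i' : Fin k} (j : Fin k) (hne : i ≠ i') : GoodPair k (vC i) (vL i' j) := by
  have h1 : (Gk k).Adj (vC i) vS := adj_of_len (by simp [vC, vS]) (by simp [vC, vS, lenGk])
  have h2 : (Gk k).Adj (vS : GkVert k) (vL i' j) :=
    adj_of_len (by simp [vS, vL]) (by simp [vS, vL, lenGk])
  refine ⟨SimpleGraph.Walk.cons h1 (SimpleGraph.Walk.cons h2 SimpleGraph.Walk.nil), ?_, ?_,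
    vS, ?_, vS_mem_label _, vS_mem_label _⟩
  · simp only [SimpleGraph.Walk.isPath_def, SimpleGraph.Walk.support_cons, SimpleGraph.Walk.support_nil]
    simp [SimpleGraph.Walk.isPath_def, vC, vS, vL]
  · intro q hq
    have := walk_lb (distC i) (distC_lip i) q
    simp only [GkWalkLen, SimpleGraph.Walk.darts_cons, SimpleGraph.Walk.darts_nil]
    simp [distC, vC, vS, vL, GkWalkLen, lenGk, Ne.symm hne] at this ⊢
    omega
  · simp

lemma case_LL_same {i j j' : Fin k} (hne : j ≠ j') : GoodPair k (vL i j) (vL i j') := by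
  have h1 : (Gk k).Adj (vL i j) (vC i) := adj_of_len (by simp [vC, vL]) (by simp [vC, vL, lenGk])
  have h2 : (Gk k).Adj (vC i) (vL i j') := adj_of_len (by simp [vC, vL]) (by simp [vC, vL, lenGk])
  refine ⟨SimpleGraph.Walk.cons h1 (SimpleGraph.Walk.cons h2 SimpleGraph.Walk.nil), ?_, ?_,
    vC i, ?_, vC_mem_label_L i j, vC_mem_label_L i j'⟩
  · simp only [SimpleGraph.Walk.isPath_def, SimpleGraph.Walk.support_cons, SimpleGraph.Walk.support_nil]
    simp [SimpleGraph.Walk.isPath_def, vC, vL, hne]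
  · intro q hq
    have := walk_lb (distL i j) (distL_lip i j) q
    simp only [GkWalkLen, SimpleGraph.Walk.darts_cons, SimpleGraph.Walk.darts_nil]
    simp [distL, vC, vL, GkWalkLen, lenGk, Ne.symm hne] at this ⊢
    omega
  · simp

lemma case_LL_diff {i i' : Fin k} (j j' : Fin k) (hne : i ≠ i') :
    GoodPair k (vL i j) (vL i' j') := by
  have h1 : (Gk k).Adj (vL i j) vS := adj_of_len (by simp [vS, vL]) (by simp [vS, vL, lenGk])
  have h2 : (Gk k).Adj (vS : GkVert k) (vL i' j') :=
    adj_of_len (by simp [vS, vL]) (by simp [vS, vL, lenGk])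
  refine ⟨SimpleGraph.Walk.cons h1 (SimpleGraph.Walk.cons h2 SimpleGraph.Walk.nil), ?_, ?_,
    vS, ?_, vS_mem_label _, vS_mem_label _⟩
  · simp only [SimpleGraph.Walk.isPath_def, SimpleGraph.Walk.support_cons, SimpleGraph.Walk.support_nil]
    simp [SimpleGraph.Walk.isPath_def, vS, vL, hne]
  · intro q hq
    have := walk_lb (distL i j) (distL_lip i j) q
    simp only [GkWalkLen, SimpleGraph.Walk.darts_cons, SimpleGraph.Walk.darts_nil]
    simp [distL, vS, vL, GkWalkLen, lenGk, Ne.symm hne] at this ⊢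
    omega
  · simp

end Aux

theorem Gk_labeling_valid_HHL' (k : ℕ) (hk : 1 ≤ k) :
    (∀ u v : GkVert k, u ≠ v →
      ∃ p : (Gk k).Walk u v, p.IsPath ∧
        (∀ q : (Gk k).Walk u v, q.IsPath → GkWalkLen p ≤ GkWalkLen q) ∧
        ∃ x ∈ p.support, x ∈ GkLabel u ∧ x ∈ GkLabel v) ∧
    (∀ π : GkVert k → ℕ, Function.Injective π →
      (∀ v, 1 ≤ π v ∧ π v ≤ 1 + k + k ^ 2) →
      (∀ v, π v ≤ π (vS : GkVert k)) →
      (∀ i : Fin k, π (vC i) = 1 + k + k ^ 2 - k + i) →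
      ∀ v u : GkVert k, u ∈ GkLabel v → π v ≤ π u) := by
  constructor
  · intro u v hne
    have main : GoodPair k u v := by
      rcases u with _ | (i | ⟨i, j⟩) <;> rcases v with _ | (i' | ⟨i', j'⟩)
      · exact absurd rfl hne
      · exact case_SC i'
      · exact case_SL i' j'
      · exact (case_SC i).symm
      · -- c-c
        have hii : i ≠ i' := fun h => hne (by simp [h])
        rcases le_total i i' with h | h
        · exact case_CC h hii
        · exact (case_CC h hii.symm).symm
      · -- c-leaf
        rcases eq_or_ne i i' with h | h
        · subst h; exact case_CL_same i j'
        · exact case_CL_diff j' h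
      · exact (case_SL i j).symm
      · -- leaf-c
        rcases eq_or_ne i' i with h | h
        · subst h; exact (case_CL_same i' j).symm
        · exact (case_CL_diff j h).symm
      · -- leaf-leaf
        rcases eq_or_ne i i' with h | h
        · subst h
          have hjj : j ≠ j' := fun h => hne (by simp [h])
          exact case_LL_same hjj
        · exact case_LL_diff j j' h
    exact main
  · intro π hinj hbound hmax hc v u hu
    -- π vS = 1 + k + k^2
    have hlast : π (vC ⟨k - 1, by omega⟩) = k + k ^ 2 := by
      rw [hc]; simp; omega
    have hSne : (vS : GkVert k) ≠ vC ⟨k - 1, by omega⟩ := by simp [vS, vC]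
    have hSN : π (vS : GkVert k) = 1 + k + k ^ 2 := by
      have h1 := hmax (vC ⟨k - 1, by omega⟩)
      have h2 := (hbound (vS : GkVert k)).2
      have h3 : π (vS : GkVert k) ≠ k + k ^ 2 := by
        rw [← hlast]; exact fun h => hSne (hinj h)
      omega
    -- every leaf has π ≤ k^2
    have hleaf : ∀ a : Fin k × Fin k, π (some (Sum.inr a)) ≤ k ^ 2 := by
      intro a
      by_contra hcon
      push_neg at hcon
      have hb := (hbound (some (Sum.inr a))).2
      rcases eq_or_ne (π (some (Sum.inr a))) (1 + k + k ^ 2) with h | h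
      · have : (some (Sum.inr a) : GkVert k) = vS := hinj (h.trans hSN.symm)
        simp [vS] at this
      · set m := π (some (Sum.inr a)) with hm
        have hmk : m - 1 - k ^ 2 < k := by omega
        have := hc ⟨m - 1 - k ^ 2, hmk⟩
        simp at this
        have hmC : π (vC ⟨m - 1 - k ^ 2, hmk⟩) = m := by omega
        have : (vC ⟨m - 1 - k ^ 2, hmk⟩ : GkVert k) = some (Sum.inr a) := hinj (hmC.trans hm)
        simp [vC] at this
    rcases v with _ | (i | a)
    · simp [GkLabel, vS] at hu
      simp [hu]
    · rcases hu with h | ⟨j, hij, rfl⟩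
      · simp at h; subst h; exact hmax _
      · have h0 : π (some (Sum.inl i)) = π (vC i) := rfl
        have h1 := hc i
        have h2 := hc j
        have : (i : ℕ) ≤ j := hij
        omega
    · rcases hu with h | h
      · subst h; exact hmax _
      · subst h
        have h0 : π (some (Sum.inr a)) = π (some (Sum.inr a)) := rfl
        have h1 := hleaf a
        have h2 := hc a.1
        have : (a.1 : ℕ) < k := a.1.isLt
        omega


/-- The labeling `GkLabel` is a valid hierarchical hub labeling of
`G_k`: (a) for every pair of distinct vertices `u, v` there is a shortest
`u`-`v`-path containing a vertex of `L(u) ∩ L(v)`; (b) `L` respects any injective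
order `π : V → {1,…,n}` (with `n = 1 + k + k²`) in which `s` is maximal and
`π(c_i) = n - k + i`. -/
theorem Gk_labeling_valid_HHL (k : ℕ) (hk : 1 ≤ k) :
    (∀ u v : GkVert k, u ≠ v →
      ∃ p : (Gk k).Walk u v, p.IsPath ∧
        (∀ q : (Gk k).Walk u v, q.IsPath → GkWalkLen p ≤ GkWalkLen q) ∧
        ∃ x ∈ p.support, x ∈ GkLabel u ∧ x ∈ GkLabel v) ∧
    (∀ π : GkVert k → ℕ, Function.Injective π →
      (∀ v, 1 ≤ π v ∧ π v ≤ 1 + k + k ^ 2) →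
      (∀ v, π v ≤ π (vS : GkVert k)) →
      (∀ i : Fin k, π (vC i) = 1 + k + k ^ 2 - k + i) →
      ∀ v u : GkVert k, u ∈ GkLabel v → π v ≤ π u) := by
  exact ⟨(Gk_labeling_valid_HHL' k hk).1, (Gk_labeling_valid_HHL' k hk).2⟩
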